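/- Let μ > 0, α > 0 with 1 - 4μα ≤ 0, and let f solve μ f'' + f' + α f = 0 with f(0) = 0 and f'(0) = v. Then for all t ≥ 0, |f(t)| ≤ (√(4μ)/√α) |v| e^{-t/(4μ)}. -/

import Mathlib

/-- Underdamped oscillator μ f'' + f' + α f = 0 (1 - 4μα ≤ 0), f(0)=0, f'(0)=v:
    bound |f(t)| ≤ (√(4μ)/√α) |v| e^{-t/(4μ)}. -/
theorem stmt_5 (μ α v : ℝ) (hμ : 0 < μ) (hα : 0 < α) (hdisc : 1 - 4 * μ * α ≤ 0)
    (f f' f'' : ℝ → ℝ)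
    (hf : ∀ t, 0 ≤ t → HasDerivAt f (f' t) t)
    (hf' : ∀ t, 0 ≤ t → HasDerivAt f' (f'' t) t)
    (hode : ∀ t, 0 ≤ t → μ * f'' t + f' t + α * f t = 0)
    (h0 : f 0 = 0) (h0' : f' 0 = v) :
    ∀ t, 0 ≤ t →
      |f t| ≤ Real.sqrt (4 * μ) / Real.sqrt α * |v| * Real.exp (-(t / (4 * μ))) := by
  set E : ℝ → ℝ := fun s => (4*μ*α+1) * f s^2 + 4*μ*(f s * f' s) + 4*μ^2 * f' s^2 with hEdef
  set g : ℝ → ℝ := fun s => E s * Real.exp (s/(2*μ)) with hgdef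
  have h2μ : (0:ℝ) < 2*μ := by linarith
  have hgd : ∀ s ∈ Set.Ici (0:ℝ), HasDerivAt g
      (((4*μ*α+1)*(2*f s*f' s) + 4*μ*(f' s*f' s + f s*f'' s) + 4*μ^2*(2*f' s*f'' s))
        * Real.exp (s/(2*μ)) + E s * (Real.exp (s/(2*μ)) * (1/(2*μ)))) s := by
    intro s hs
    have h1 := hf s hs
    have h2 := hf' s hs
    have hE : HasDerivAt E ((4*μ*α+1)*(2*f s*f' s) + 4*μ*(f' s*f' s + f s*f'' s)
        + 4*μ^2*(2*f' s*f'' s)) s := by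
      have d1 : HasDerivAt (fun u => f u ^ 2) (2*f s*f' s) s := by
        simp only [sq]
        rw [show (2*f s*f' s) = f' s * f s + f s * f' s by ring]
        exact h1.mul h1
      have d2 : HasDerivAt (fun u => f u * f' u) (f' s*f' s + f s*f'' s) s := h1.mul h2
      have d3 : HasDerivAt (fun u => f' u ^ 2) (2*f' s*f'' s) s := by
        simp only [sq]
        rw [show (2*f' s*f'' s) = f'' s * f' s + f' s * f'' s by ring]
        exact h2.mul h2
      exact ((d1.const_mul _).add (d2.const_mul _)).add (d3.const_mul _)
    have hexp : HasDerivAt (fun u : ℝ => Real.exp (u/(2*μ)))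
        (Real.exp (s/(2*μ)) * (1/(2*μ))) s := by
      simpa using (((hasDerivAt_id s).div_const (2*μ)).exp)
    exact hE.mul hexp
  have hderiv_nonpos : ∀ s ∈ interior (Set.Ici (0:ℝ)), deriv g s ≤ 0 := by
    intro s hs
    rw [interior_Ici] at hs
    have hs' : (0:ℝ) ≤ s := le_of_lt hs
    rw [(hgd s hs').deriv]
    have hodes := hode s hs'
    have key : 2*μ*((4*μ*α+1)*(2*f s*f' s) + 4*μ*(f' s*f' s + f s*f'' s)
        + 4*μ^2*(2*f' s*f'' s)) + E s ≤ 0 := by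
      have hid : 2*μ*((4*μ*α+1)*(2*f s*f' s) + 4*μ*(f' s*f' s + f s*f'' s)
          + 4*μ^2*(2*f' s*f'' s)) + E s
          = (1-4*μ*α)*(f s)^2 - 4*μ^2*(f' s)^2
            + (8*μ*(f s) + 16*μ^2*(f' s))*(μ * f'' s + f' s + α * f s) := by
        simp only [hEdef]; ring
      rw [hid, hodes]
      nlinarith [sq_nonneg (f s), sq_nonneg (f' s), sq_nonneg μ, mul_pos hμ hμ]
    have hexp_pos : (0:ℝ) < Real.exp (s/(2*μ)) := Real.exp_pos _
    have : ((4*μ*α+1)*(2*f s*f' s) + 4*μ*(f' s*f' s + f s*f'' s)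
        + 4*μ^2*(2*f' s*f'' s)) * Real.exp (s/(2*μ))
        + E s * (Real.exp (s/(2*μ)) * (1/(2*μ)))
        = (2*μ*((4*μ*α+1)*(2*f s*f' s) + 4*μ*(f' s*f' s + f s*f'' s)
            + 4*μ^2*(2*f' s*f'' s)) + E s) * Real.exp (s/(2*μ)) / (2*μ) := by
      field_simp
    rw [this]
    apply div_nonpos_of_nonpos_of_nonneg _ (le_of_lt h2μ)
    exact mul_nonpos_of_nonpos_of_nonneg key (le_of_lt hexp_pos)
  have hanti : AntitoneOn g (Set.Ici 0) := by
    apply antitoneOn_of_deriv_nonpos (convex_Ici 0)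
    · exact fun s hs => ((hgd s hs).continuousAt).continuousWithinAt
    · intro s hs
      rw [interior_Ici] at hs
      exact (hgd s (Set.mem_Ici.mpr (le_of_lt (Set.mem_Ioi.mp hs)))).differentiableAt.differentiableWithinAt
    · exact hderiv_nonpos
  intro t ht
  have hg : g t ≤ g 0 := hanti (Set.mem_Ici.mpr le_rfl) ht ht
  have hg0 : g 0 = 4*μ^2*v^2 := by
    simp [hgdef, hEdef, h0, h0']
  have hEt : E t ≤ 4*μ^2*v^2 * Real.exp (-(t/(2*μ))) := by
    have := hg
    rw [hg0] at this
    have hexp_pos : (0:ℝ) < Real.exp (t/(2*μ)) := Real.exp_pos _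
    rw [Real.exp_neg]
    rw [hgdef] at this
    simp only at this
    calc E t = E t * Real.exp (t/(2*μ)) * (Real.exp (t/(2*μ)))⁻¹ := by
            field_simp
      _ ≤ 4*μ^2*v^2 * (Real.exp (t/(2*μ)))⁻¹ := by
            apply mul_le_mul_of_nonneg_right this (by positivity)
  have hfsq : 4*μ*α*(f t)^2 ≤ E t := by
    have : E t - 4*μ*α*(f t)^2 = (f t + 2*μ*f' t)^2 := by simp only [hEdef]; ring
    nlinarith [sq_nonneg (f t + 2*μ*f' t)]
  have hfsq2 : α * f t ^ 2 ≤ μ * v ^ 2 * Real.exp (-(t/(2*μ))) := by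
    have h := hfsq.trans hEt
    have h4 : (0:ℝ) < 4*μ := by linarith
    refine le_of_mul_le_mul_left ?_ h4
    nlinarith [h]
  have hexp2 : Real.exp (-(t/(4*μ)))^2 = Real.exp (-(t/(2*μ))) := by
    rw [sq, ← Real.exp_add]
    congr 1
    field_simp
    ring
  have hRnn : 0 ≤ Real.sqrt (4 * μ) / Real.sqrt α * |v| * Real.exp (-(t / (4 * μ))) := by
    positivity
  have hRsq : (Real.sqrt (4 * μ) / Real.sqrt α * |v| * Real.exp (-(t / (4 * μ))))^2
      = 4*μ/α * v^2 * Real.exp (-(t/(2*μ))) := by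
    rw [mul_pow, mul_pow, div_pow, Real.sq_sqrt (by positivity : (0:ℝ) ≤ 4*μ),
      Real.sq_sqrt (le_of_lt hα), sq_abs, hexp2]
  calc |f t| = Real.sqrt ((f t)^2) := (Real.sqrt_sq_eq_abs _).symm
    _ ≤ Real.sqrt ((Real.sqrt (4 * μ) / Real.sqrt α * |v| * Real.exp (-(t / (4 * μ))))^2) := by
        apply Real.sqrt_le_sqrt
        rw [hRsq, div_mul_eq_mul_div, div_mul_eq_mul_div, le_div_iff₀ hα]
        nlinarith [hfsq2, mul_nonneg (mul_nonneg hμ.le (sq_nonneg v)) (Real.exp_pos (-(t/(2*μ)))).le]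
    _ = _ := Real.sqrt_sq hRnn
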